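/- arXiv:1810.09169 — 2 statements merged into one kernel-verified Lean document; each statement's English description precedes it below -/
import Mathlib

section
/- Let G(E) be a graph inverse semigroup endowed with a Hausdorff topology τ making its multiplication jointly continuous and such that the set E(G(E)) of idempotents of G(E) is compact. Then for every Hausdorff topological semigroup S containing G(E) as a subsemigroup whose subspace topology is τ, the set G(E) is closed in S. -/
/-! Preamble: graph inverse semigroups and compactness-type properties. -/

namespace GISPaper

variable {V E : Type*}

/-- `IsPathFrom src rng v l` means that the list of edges `l` is composable
and starts at the vertex `v`. -/
def IsPathFrom (src rng : E → V) : V → List E → Prop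
  | _, [] => True
  | v, e :: l => src e = v ∧ IsPathFrom src rng (rng e) l

/-- The end vertex of a list of edges starting at the vertex `v`. -/
def pathEnd (rng : E → V) : V → List E → V
  | v, [] => v
  | _, e :: l => pathEnd rng (rng e) l

theorem pathEnd_append (rng : E → V) (v : V) (l₁ l₂ : List E) :
    pathEnd rng v (l₁ ++ l₂) = pathEnd rng (pathEnd rng v l₁) l₂ := by
  induction l₁ generalizing v with
  | nil => rfl
  | cons e l ih => simpa [pathEnd] using ih (rng e)

theorem isPathFrom_append (src rng : E → V) (v : V) (l₁ l₂ : List E) :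
    IsPathFrom src rng v (l₁ ++ l₂) ↔
      IsPathFrom src rng v l₁ ∧ IsPathFrom src rng (pathEnd rng v l₁) l₂ := by
  induction l₁ generalizing v with
  | nil => simp [IsPathFrom, pathEnd]
  | cons e l ih => simp [IsPathFrom, pathEnd, ih (rng e), and_assoc]

/-- A (directed) path in the graph `(V, E, src, rng)`: a starting vertex together
with a composable list of edges (a path of length zero is just a vertex). -/
structure GPath (src rng : E → V) where
  start : V
  edges : List E
  isPath : IsPathFrom src rng start edges

/-- The range (end vertex) of a path. -/
def GPath.range {src rng : E → V} (p : GPath src rng) : V :=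
  pathEnd rng p.start p.edges

/-- The nonzero elements of the graph inverse semigroup: pairs `u v⁻¹` of paths
with `r u = r v`. -/
def GISElem (src rng : E → V) : Type _ :=
  {p : GPath src rng × GPath src rng // p.1.range = p.2.range}

/-- The graph inverse semigroup over the graph `(V, E, src, rng)`: the nonzero
elements `u v⁻¹` together with a zero element (represented by `none`). -/
def GIS (src rng : E → V) : Type _ := Option (GISElem src rng)

instance {src rng : E → V} : Zero (GIS src rng) :=
  ⟨(none : Option (GISElem src rng))⟩

open Classical in
/-- The multiplication of a graph inverse semigroup:
`u₁v₁⁻¹ · u₂v₂⁻¹ = u₁w v₂⁻¹` if `u₂ = v₁ w`, `u₁v₁⁻¹ · u₂v₂⁻¹ = u₁ (v₂ w)⁻¹` if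
`v₁ = u₂ w`, and `0` otherwise; `0` is absorbing. -/
noncomputable def GIS.mul {src rng : E → V} :
    Option (GISElem src rng) → Option (GISElem src rng) → Option (GISElem src rng)
  | some ⟨(u₁, v₁), h₁⟩, some ⟨(u₂, v₂), h₂⟩ =>
    if h : v₁.start = u₂.start ∧ v₁.edges <+: u₂.edges then
      some ⟨(⟨u₁.start, u₁.edges ++ u₂.edges.drop v₁.edges.length, by
        obtain ⟨hs, t, ht⟩ := h
        have hdrop : u₂.edges.drop v₁.edges.length = t := by
          rw [← ht, List.drop_left]
        have hu₂ := u₂.isPath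
        rw [← ht, isPathFrom_append] at hu₂
        rw [hdrop, isPathFrom_append]
        refine ⟨u₁.isPath, ?_⟩
        have he : pathEnd rng u₁.start u₁.edges = pathEnd rng u₂.start v₁.edges := by
          rw [← hs]; exact h₁
        rw [he]; exact hu₂.2⟩, v₂), by
        show pathEnd rng u₁.start (u₁.edges ++ u₂.edges.drop v₁.edges.length) = v₂.range
        obtain ⟨hs, t, ht⟩ := h
        have hdrop : u₂.edges.drop v₁.edges.length = t := by
          rw [← ht, List.drop_left]
        rw [hdrop, pathEnd_append]
        have he : pathEnd rng u₁.start u₁.edges = pathEnd rng u₂.start v₁.edges := by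
          rw [← hs]; exact h₁
        rw [he, ← pathEnd_append, ht]
        exact h₂⟩
    else if h' : u₂.start = v₁.start ∧ u₂.edges <+: v₁.edges then
      some ⟨(u₁, ⟨v₂.start, v₂.edges ++ v₁.edges.drop u₂.edges.length, by
        obtain ⟨hs, t, ht⟩ := h'
        have hdrop : v₁.edges.drop u₂.edges.length = t := by
          rw [← ht, List.drop_left]
        have hv₁ := v₁.isPath
        rw [← ht, isPathFrom_append] at hv₁
        rw [hdrop, isPathFrom_append]
        refine ⟨v₂.isPath, ?_⟩
        have he : pathEnd rng v₂.start v₂.edges = pathEnd rng v₁.start u₂.edges := by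
          rw [← hs]; exact h₂.symm
        rw [he]; exact hv₁.2⟩), by
        show u₁.range = pathEnd rng v₂.start (v₂.edges ++ v₁.edges.drop u₂.edges.length)
        obtain ⟨hs, t, ht⟩ := h'
        have hdrop : v₁.edges.drop u₂.edges.length = t := by
          rw [← ht, List.drop_left]
        have he : pathEnd rng v₂.start v₂.edges = pathEnd rng v₁.start u₂.edges := by
          rw [← hs]; exact h₂.symm
        rw [hdrop, pathEnd_append, he, ← pathEnd_append, ht]
        exact h₁⟩
    else none
  | _, _ => none

noncomputable instance {src rng : E → V} : Mul (GIS src rng) := ⟨GIS.mul⟩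

theorem GIS.zero_mul {src rng : E → V} (x : GIS src rng) : 0 * x = 0 := rfl

/-- The topology in which every nonzero point is isolated and the open
neighbourhoods of `0` are exactly the cofinite sets containing `0`. -/
def tauC (α : Type*) [Zero α] : TopologicalSpace α where
  IsOpen U := (0 : α) ∈ U → Uᶜ.Finite
  isOpen_univ := by simp
  isOpen_inter U W hU hW h := by
    rw [Set.compl_inter]
    exact (hU h.1).union (hW h.2)
  isOpen_sUnion 𝒮 h h0 := by
    obtain ⟨U, hU, hU0⟩ := h0
    exact (h U hU hU0).subset (Set.compl_subset_compl.mpr (Set.subset_sUnion_of_mem hU))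

/-- A topological space is CLP-compact if every cover by clopen sets has a
finite subcover. -/
def CLPCompact (X : Type*) [TopologicalSpace X] : Prop :=
  ∀ 𝒰 : Set (Set X), (∀ U ∈ 𝒰, IsClopen U) → ⋃₀ 𝒰 = Set.univ →
    ∃ ℱ ⊆ 𝒰, ℱ.Finite ∧ ⋃₀ ℱ = Set.univ

/-- A topological space is countably compact if every infinite subset has an
accumulation point. -/
def CountablyCompactSpace (X : Type*) [TopologicalSpace X] : Prop :=
  ∀ B : Set X, B.Infinite → ∃ x : X, AccPt x (Filter.principal B)

/-- A topological space is feebly compact if every locally finite family of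
nonempty open sets is finite. -/
def FeeblyCompact (X : Type*) [TopologicalSpace X] : Prop :=
  ∀ 𝒰 : Set (Set X), (∀ U ∈ 𝒰, IsOpen U ∧ U.Nonempty) →
    (∀ x : X, ∃ N ∈ nhds x, {U ∈ 𝒰 | (U ∩ N).Nonempty}.Finite) → 𝒰.Finite

/-- The multiplication of the bicyclic monoid on `ℕ × ℕ`. -/
def bicyclicMul (x y : ℕ × ℕ) : ℕ × ℕ :=
  (x.1 + y.1 - min x.2 y.1, x.2 + y.2 - min x.2 y.1)

/-- The multiplication of the semigroup of `X × X`-matrix units (with zero `none`). -/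
def matUnitsMul {X : Type*} [DecidableEq X] :
    Option (X × X) → Option (X × X) → Option (X × X)
  | some (a, b), some (c, d) => if b = c then some (a, d) else none
  | _, _ => none

/-- A cycle based at the vertex `e`: a path of nonzero length from `e` to `e`. -/
def HasCycleAt (src rng : E → V) (e : V) : Prop :=
  ∃ p : GPath src rng, p.edges ≠ [] ∧ p.start = e ∧ p.range = e

end GISPaper


namespace GISAux
open GISPaper Filter Topology

variable {V E : Type*} {src rng : E → V}

theorem gpath_ext {p q : GPath src rng} (h1 : p.start = q.start)
    (h2 : p.edges = q.edges) : p = q := by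
  cases p; cases q; cases h1; cases h2; rfl

theorem isPathFrom_take (P : GPath src rng) (n : ℕ) :
    IsPathFrom src rng P.start (P.edges.take n) := by
  have h := P.isPath
  rw [← List.take_append_drop n P.edges, isPathFrom_append] at h
  exact h.1

/-- Truncation of a path. -/
def takeP (P : GPath src rng) (n : ℕ) : GPath src rng :=
  ⟨P.start, P.edges.take n, isPathFrom_take P n⟩

/-- A nonzero element of the graph inverse semigroup. -/
def elm (P Q : GPath src rng) (h : P.range = Q.range) : GIS src rng :=
  some ⟨(P, Q), h⟩

/-- The idempotent `P P⁻¹`. -/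
def idemP (P : GPath src rng) : GIS src rng := elm P P rfl

theorem elm_ne_zero (P Q : GPath src rng) (h : P.range = Q.range) :
    elm P Q h ≠ (0 : GIS src rng) := fun hh => Option.some_ne_none _ hh

theorem idemP_ne_zero (P : GPath src rng) : idemP P ≠ (0 : GIS src rng) :=
  elm_ne_zero P P rfl

theorem idemP_inj {P Q : GPath src rng} (h : idemP P = idemP Q) : P = Q := by
  have h2 := Option.some.inj h
  exact congrArg (fun e => e.val.1) h2

theorem mul_eq (x y : GIS src rng) : x * y = GIS.mul x y := rfl

theorem zero_mul' (g : GIS src rng) : 0 * g = 0 := rfl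

theorem mul_zero' (g : GIS src rng) : g * 0 = 0 := by
  show GIS.mul g none = none
  cases g with
  | none => rfl
  | some e => obtain ⟨⟨u, v⟩, h⟩ := e; rfl

theorem idemP_mul_of_prefix {A P Q : GPath src rng} (h : P.range = Q.range)
    (hs : A.start = P.start) (hp : A.edges <+: P.edges) :
    idemP A * elm P Q h = elm P Q h := by
  show GIS.mul _ _ = _
  unfold idemP elm
  simp only [GIS.mul]
  rw [dif_pos ⟨hs, hp⟩]
  obtain ⟨t, ht⟩ := hp
  have hedge : A.edges ++ P.edges.drop A.edges.length = P.edges := by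
    rw [← ht, List.drop_left]
  exact congrArg some (Subtype.ext (Prod.ext (gpath_ext hs hedge) rfl))

theorem mul_idemP_of_prefix {A P Q : GPath src rng} (h : P.range = Q.range)
    (hs : A.start = Q.start) (hp : A.edges <+: Q.edges) :
    elm P Q h * idemP A = elm P Q h := by
  show GIS.mul _ _ = _
  by_cases hQA : Q.edges <+: A.edges
  · have hedges : A.edges = Q.edges :=
      hp.eq_of_length (le_antisymm hp.length_le hQA.length_le)
    have hAQ : A = Q := gpath_ext hs hedges
    subst hAQ
    unfold idemP elm
    simp only [GIS.mul]
    rw [dif_pos ⟨rfl, List.prefix_refl _⟩]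
    have hedge : P.edges ++ A.edges.drop A.edges.length = P.edges := by
      rw [List.drop_length, List.append_nil]
    exact congrArg some (Subtype.ext (Prod.ext (gpath_ext rfl hedge) rfl))
  · unfold idemP elm
    simp only [GIS.mul]
    rw [dif_neg (fun hc => hQA hc.2), dif_pos ⟨hs, hp⟩]
    obtain ⟨t, ht⟩ := hp
    have hedge : A.edges ++ Q.edges.drop A.edges.length = Q.edges := by
      rw [← ht, List.drop_left]
    exact congrArg some (Subtype.ext (Prod.ext rfl (gpath_ext hs hedge)))

theorem idemP_mul_idemP_of_prefix {A B : GPath src rng} (hs : A.start = B.start)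
    (hp : A.edges <+: B.edges) : idemP A * idemP B = idemP B :=
  idemP_mul_of_prefix rfl hs hp

theorem idemP_mul_idemP_of_dom {A B : GPath src rng} (hs : B.start = A.start)
    (hp : B.edges <+: A.edges) : idemP A * idemP B = idemP A :=
  mul_idemP_of_prefix rfl hs hp

theorem idemP_mul_self (A : GPath src rng) : idemP A * idemP A = idemP A :=
  idemP_mul_idemP_of_prefix rfl (List.prefix_refl _)

theorem idemP_mul_orth {A B : GPath src rng}
    (h1 : ¬(A.start = B.start ∧ A.edges <+: B.edges))
    (h2 : ¬(B.start = A.start ∧ B.edges <+: A.edges)) :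
    idemP A * idemP B = (0 : GIS src rng) := by
  show GIS.mul _ _ = _
  unfold idemP elm
  simp only [GIS.mul]
  rw [dif_neg h1, dif_neg h2]
  rfl

theorem idem_classify {g : GIS src rng} (h : g * g = g) :
    g = 0 ∨ ∃ P, g = idemP P := by
  cases g with
  | none => exact Or.inl rfl
  | some e =>
    obtain ⟨⟨P, Q⟩, hr⟩ := e
    right
    replace h : GIS.mul _ _ = _ := h
    simp only [GIS.mul] at h
    by_cases hc : Q.start = P.start ∧ Q.edges <+: P.edges
    · rw [dif_pos hc] at h
      have h2 := congrArg Subtype.val (Option.some.inj h)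
      have h3 := congrArg GPath.edges (congrArg Prod.fst h2)
      have h4 : P.edges ++ P.edges.drop Q.edges.length = P.edges := h3
      have h5 : P.edges.length ≤ Q.edges.length := by
        have h6 := congrArg List.length h4
        rw [List.length_append, List.length_drop] at h6
        omega
      have hedges : Q.edges = P.edges :=
        hc.2.eq_of_length (le_antisymm hc.2.length_le h5)
      have hPQ : P = Q := gpath_ext hc.1.symm hedges.symm
      exact ⟨P, by cases hPQ; rfl⟩
    · rw [dif_neg hc] at h
      by_cases hc2 : P.start = Q.start ∧ P.edges <+: Q.edges
      · rw [dif_pos hc2] at h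
        have h2 := congrArg Subtype.val (Option.some.inj h)
        have h3 := congrArg GPath.edges (congrArg Prod.snd h2)
        have h4 : Q.edges ++ Q.edges.drop P.edges.length = Q.edges := h3
        have h5 : Q.edges.length ≤ P.edges.length := by
          have h6 := congrArg List.length h4
          rw [List.length_append, List.length_drop] at h6
          omega
        have hedges : P.edges = Q.edges :=
          hc2.2.eq_of_length (le_antisymm hc2.2.length_le h5)
        have hPQ : P = Q := gpath_ext hc2.1 hedges
        exact ⟨P, by cases hPQ; rfl⟩
      · rw [dif_neg hc2] at h
        exact absurd h (fun hh => Option.some_ne_none _ hh.symm)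

/-- The set of idempotents of "rank `n`" together with zero. -/
def Fset (src rng : E → V) (n : ℕ) : Set (GIS src rng) :=
  {g | g = 0 ∨ ∃ P : GPath src rng, g = idemP P ∧ P.edges.length = n}

theorem Fset_subset_idem (n : ℕ) :
    Fset src rng n ⊆ {x : GIS src rng | x * x = x} := by
  rintro g (rfl | ⟨P, rfl, -⟩)
  · exact rfl
  · exact idemP_mul_self P

theorem Fset_orth {n : ℕ} {a b : GIS src rng} (ha : a ∈ Fset src rng n)
    (hb : b ∈ Fset src rng n) (hab : a ≠ b) : a * b = 0 := by
  obtain (rfl | ⟨P, rfl, hP⟩) := ha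
  · exact zero_mul' b
  · obtain (rfl | ⟨Q, rfl, hQ⟩) := hb
    · exact mul_zero' _
    · have hPQ : P ≠ Q := fun h => hab (congrArg idemP h)
      apply idemP_mul_orth
      · rintro ⟨hs, hp⟩
        exact hPQ (gpath_ext hs (hp.eq_of_length (hP.trans hQ.symm)))
      · rintro ⟨hs, hp⟩
        exact hPQ (gpath_ext hs.symm (hp.eq_of_length (hQ.trans hP.symm)).symm)

theorem ortho_closed {G' : Type*} [TopologicalSpace G'] [T2Space G'] [Mul G'] [Zero G']
    (hcont : Continuous fun p : G' × G' => p.1 * p.2)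
    (hidem : IsCompact {x : G' | x * x = x})
    {A : Set G'} (h0 : (0 : G') ∈ A) (hsub : A ⊆ {x : G' | x * x = x})
    (horth : ∀ a ∈ A, ∀ b ∈ A, a ≠ b → a * b = 0) : IsClosed A := by
  refine isClosed_of_closure_subset fun d hd => ?_
  by_contra hdA
  have hdd : d * d = d := (hidem.isClosed.closure_subset_iff.mpr hsub) hd
  have hd0 : d ≠ 0 := fun h => hdA (h ▸ h0)
  have hpre : IsOpen ((fun p : G' × G' => p.1 * p.2) ⁻¹' {(0 : G')}ᶜ) :=
    (isClosed_singleton.isOpen_compl).preimage hcont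
  have hmem : (d, d) ∈ (fun p : G' × G' => p.1 * p.2) ⁻¹' {(0 : G')}ᶜ := by
    simp only [Set.mem_preimage, Set.mem_compl_iff, Set.mem_singleton_iff]
    rw [hdd]
    exact hd0
  obtain ⟨U1, U2, hU1, hU2, hd1, hd2, hsub2⟩ := isOpen_prod_iff.mp hpre d d hmem
  obtain ⟨e₁, he₁U, he₁A⟩ := mem_closure_iff.mp hd (U1 ∩ U2) (hU1.inter hU2) ⟨hd1, hd2⟩
  have hne1 : e₁ ≠ d := fun h => hdA (h ▸ he₁A)
  obtain ⟨e₂, ⟨he₂U, he₂ne⟩, he₂A⟩ := mem_closure_iff.mp hd ((U1 ∩ U2) ∩ {e₁}ᶜ)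
    ((hU1.inter hU2).inter isClosed_singleton.isOpen_compl)
    ⟨⟨hd1, hd2⟩, fun h => hne1 (Set.mem_singleton_iff.mp h).symm⟩
  have hmul0 : e₁ * e₂ = 0 :=
    horth e₁ he₁A e₂ he₂A (fun h => he₂ne (Set.mem_singleton_iff.mpr h.symm))
  have hmem2 : (e₁, e₂) ∈ (fun p : G' × G' => p.1 * p.2) ⁻¹' {(0 : G')}ᶜ :=
    hsub2 ⟨he₁U.1, he₂U.2⟩
  exact hmem2 (Set.mem_singleton_iff.mpr hmul0)

theorem tendsto_mul_aux {α G' S : Type*} [TopologicalSpace S] [Mul G'] [Mul S]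
    (ι : G' → S) (hhom : ∀ x y : G', ι (x * y) = ι x * ι y)
    (hSmul : Continuous fun p : S × S => p.1 * p.2)
    {l : Filter α} {φ ψ : α → G'} {a b : S}
    (h1 : Tendsto (fun g => ι (φ g)) l (𝓝 a))
    (h2 : Tendsto (fun g => ι (ψ g)) l (𝓝 b)) :
    Tendsto (fun g => ι (φ g * ψ g)) l (𝓝 (a * b)) := by
  have h3 := (hSmul.tendsto (a, b)).comp (h1.prodMk_nhds h2)
  exact h3.congr fun g => (hhom _ _).symm

theorem ultra_limit {α G' S : Type*} [TopologicalSpace G'] [TopologicalSpace S] [T2Space S]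
    {ι : G' → S} (hcont : Continuous ι)
    {A : Set G'} (hAc : IsCompact A)
    (W : Ultrafilter α) (φ : α → G') (hev : ∀ᶠ g in (W : Filter α), φ g ∈ A) :
    ∃ d ∈ A, Tendsto (fun g => ι (φ g)) ↑W (𝓝 (ι d)) := by
  have hle : ↑(W.map fun g => ι (φ g)) ≤ Filter.principal (ι '' A) := by
    rw [Filter.le_principal_iff]
    exact Filter.mem_map.mpr (hev.mono fun g hg => Set.mem_image_of_mem ι hg)
  obtain ⟨a, ⟨d, hdA, rfl⟩, hle2⟩ := (hAc.image hcont).ultrafilter_le_nhds _ hle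
  refine ⟨d, hdA, ?_⟩
  rw [Ultrafilter.coe_map] at hle2
  exact hle2

theorem chain_aux {V E S : Type*} {src rng : E → V}
    (τ : TopologicalSpace (GIS src rng)) (hT2 : @T2Space _ τ)
    (hcont : @Continuous _ _ (@instTopologicalSpaceProd _ _ τ τ) τ
      (fun p : GIS src rng × GIS src rng => p.1 * p.2))
    (hidem : @IsCompact _ τ {x : GIS src rng | x * x = x})
    [TopologicalSpace S] [T2Space S] [Mul S]
    (hSmul : Continuous (fun p : S × S => p.1 * p.2))
    (ι : GIS src rng → S) (hinj : Function.Injective ι)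
    (hhom : ∀ x y : GIS src rng, ι (x * y) = ι x * ι y)
    (hind : @Topology.IsInducing _ _ τ _ ι)
    (W : Ultrafilter (GIS src rng))
    (φ : ℕ → GIS src rng → GIS src rng)
    (h1 : ∀ n, ∀ᶠ g in (W : Filter (GIS src rng)), φ n g ∈ Fset src rng n)
    (h2 : ∀ m n : ℕ, m ≤ n →
      ∀ᶠ g in (W : Filter (GIS src rng)), (φ m g * φ n g) * φ m g = φ n g) :
    ∃ δ : ℕ → GIS src rng, (∀ n, Tendsto (fun g => ι (φ n g)) ↑W (𝓝 (ι (δ n)))) ∧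
      Tendsto (fun n => ι (δ n)) atTop (𝓝 (ι 0)) := by
  letI := τ
  haveI := hT2
  have hι : Continuous ι := hind.continuous
  have hFcl : ∀ n, IsClosed (Fset src rng n) := fun n =>
    ortho_closed hcont hidem (Or.inl rfl) (Fset_subset_idem n)
      (fun a ha b hb hab => Fset_orth ha hb hab)
  have hFcp : ∀ n, IsCompact (Fset src rng n) := fun n =>
    hidem.of_isClosed_subset (hFcl n) (Fset_subset_idem n)
  have hlim : ∀ n, ∃ d ∈ Fset src rng n,
      Tendsto (fun g => ι (φ n g)) ↑W (𝓝 (ι d)) := fun n =>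
    ultra_limit hι (hFcp n) W (φ n) (h1 n)
  choose δ hδF hδT using hlim
  refine ⟨δ, hδT, ?_⟩
  have hrel : ∀ m n, m ≤ n → (δ m * δ n) * δ m = δ n := by
    intro m n hmn
    have t1 : Tendsto (fun g => ι ((φ m g * φ n g) * φ m g)) ↑W
        (𝓝 ((ι (δ m) * ι (δ n)) * ι (δ m))) :=
      tendsto_mul_aux ι hhom hSmul
        (tendsto_mul_aux ι hhom hSmul (hδT m) (hδT n)) (hδT m)
    have t2 : Tendsto (fun g => ι (φ n g)) ↑W (𝓝 ((ι (δ m) * ι (δ n)) * ι (δ m))) :=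
      t1.congr' ((h2 m n hmn).mono fun g hg => congrArg ι hg)
    have t3 := tendsto_nhds_unique t2 (hδT n)
    rw [← hhom, ← hhom] at t3
    exact hinj t3
  rw [Filter.tendsto_iff_ultrafilter]
  intro Vu hVu
  have hKe : ∀ n : ℕ, δ n ∈ {x : GIS src rng | x * x = x} := fun n =>
    Fset_subset_idem n (hδF n)
  obtain ⟨d, hdK, hdT⟩ :=
    ultra_limit hι hidem Vu (fun n => δ n) (Filter.Eventually.of_forall hKe)
  have hrel2 : ∀ m, (δ m * d) * δ m = d := by
    intro m
    have hm : ∀ᶠ n in (Vu : Filter ℕ), m ≤ n := hVu (eventually_ge_atTop m)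
    have t1 : Tendsto (fun n => ι ((δ m * δ n) * δ m)) ↑Vu
        (𝓝 ((ι (δ m) * ι d) * ι (δ m))) :=
      tendsto_mul_aux ι hhom hSmul
        (tendsto_mul_aux ι hhom hSmul tendsto_const_nhds hdT) tendsto_const_nhds
    have t2 : Tendsto (fun n => ι (δ n)) ↑Vu (𝓝 ((ι (δ m) * ι d) * ι (δ m))) :=
      t1.congr' (hm.mono fun n hn => congrArg ι (hrel m n hn))
    have t3 := tendsto_nhds_unique t2 hdT
    rw [← hhom, ← hhom] at t3
    exact hinj t3
  have hd0 : d = 0 := by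
    rcases idem_classify hdK with h0 | ⟨t, rfl⟩
    · exact h0
    · exfalso
      set m := t.edges.length + 1 with hm
      rcases hδF m with hz | ⟨w, hw, hwlen⟩
      · have hq := hrel2 m
        rw [hz, zero_mul', zero_mul'] at hq
        exact idemP_ne_zero t hq.symm
      · have heq := hrel2 m
        rw [hw] at heq
        by_cases hc1 : w.start = t.start ∧ w.edges <+: t.edges
        · have h5 := hc1.2.length_le
          rw [hwlen] at h5
          omega
        · by_cases hc2 : t.start = w.start ∧ t.edges <+: w.edges
          · rw [idemP_mul_idemP_of_dom hc2.1 hc2.2, idemP_mul_self] at heq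
            have hwt : w = t := idemP_inj heq
            rw [hwt] at hwlen
            omega
          · rw [idemP_mul_orth hc1 hc2, zero_mul'] at heq
            exact idemP_ne_zero t heq.symm
  rw [hd0] at hdT
  exact hdT

theorem Fset_compact {V E : Type*} {src rng : E → V}
    (τ : TopologicalSpace (GIS src rng)) (hT2 : @T2Space _ τ)
    (hcont : @Continuous _ _ (@instTopologicalSpaceProd _ _ τ τ) τ
      (fun p : GIS src rng × GIS src rng => p.1 * p.2))
    (hidem : @IsCompact _ τ {x : GIS src rng | x * x = x}) (n : ℕ) :
    @IsCompact _ τ (Fset src rng n) := by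
  letI := τ
  haveI := hT2
  exact hidem.of_isClosed_subset
    (ortho_closed hcont hidem (Or.inl rfl) (Fset_subset_idem n)
      (fun a ha b hb hab => Fset_orth ha hb hab)) (Fset_subset_idem n)

/-- The truncated left idempotent of an element. -/
def uIdem (n : ℕ) : GIS src rng → GIS src rng
  | none => none
  | some e => idemP (takeP e.val.1 n)

/-- The truncated right idempotent of an element. -/
def vIdem (n : ℕ) : GIS src rng → GIS src rng
  | none => none
  | some e => idemP (takeP e.val.2 n)

/-- The length of the first path of an element. -/
def uLen : GIS src rng → ℕ
  | none => 0
  | some e => e.val.1.edges.length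

/-- The length of the second path of an element. -/
def vLen : GIS src rng → ℕ
  | none => 0
  | some e => e.val.2.edges.length

theorem uIdem_mul {g : GIS src rng} (hg : g ≠ 0) (n : ℕ) :
    uIdem n g * g = g := by
  cases g with
  | none => exact absurd rfl hg
  | some e =>
    obtain ⟨⟨P, Q⟩, hr⟩ := e
    show idemP (takeP P n) * elm P Q hr = elm P Q hr
    exact idemP_mul_of_prefix hr rfl (List.take_prefix n P.edges)

theorem mul_vIdem {g : GIS src rng} (hg : g ≠ 0) (n : ℕ) :
    g * vIdem n g = g := by
  cases g with
  | none => exact absurd rfl hg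
  | some e =>
    obtain ⟨⟨P, Q⟩, hr⟩ := e
    show elm P Q hr * idemP (takeP Q n) = elm P Q hr
    exact mul_idemP_of_prefix hr rfl (List.take_prefix n Q.edges)

theorem takeP_chain (P : GPath src rng) {m n : ℕ} (hmn : m ≤ n) :
    (idemP (takeP P m) * idemP (takeP P n)) * idemP (takeP P m)
      = idemP (takeP P n) := by
  have hpre : (takeP P m).edges <+: (takeP P n).edges := by
    show P.edges.take m <+: P.edges.take n
    have h : P.edges.take m = (P.edges.take n).take m := by
      rw [List.take_take, min_eq_left hmn]
    rw [h]
    exact List.take_prefix _ _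
  have h1 : idemP (takeP P m) * idemP (takeP P n) = idemP (takeP P n) :=
    idemP_mul_idemP_of_prefix rfl hpre
  have h2 : idemP (takeP P n) * idemP (takeP P m) = idemP (takeP P n) :=
    idemP_mul_idemP_of_dom rfl hpre
  rw [h1, h2]

theorem uIdem_chain {g : GIS src rng} (hg : g ≠ 0) {m n : ℕ} (hmn : m ≤ n) :
    (uIdem m g * uIdem n g) * uIdem m g = uIdem n g := by
  cases g with
  | none => exact absurd rfl hg
  | some e =>
    obtain ⟨⟨P, Q⟩, hr⟩ := e
    exact takeP_chain P hmn

theorem vIdem_chain {g : GIS src rng} (hg : g ≠ 0) {m n : ℕ} (hmn : m ≤ n) :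
    (vIdem m g * vIdem n g) * vIdem m g = vIdem n g := by
  cases g with
  | none => exact absurd rfl hg
  | some e =>
    obtain ⟨⟨P, Q⟩, hr⟩ := e
    exact takeP_chain Q hmn

theorem uIdem_mem_Fset {g : GIS src rng} (hg : g ≠ 0) {n : ℕ} (h : n ≤ uLen g) :
    uIdem n g ∈ Fset src rng n := by
  cases g with
  | none => exact absurd rfl hg
  | some e =>
    obtain ⟨⟨P, Q⟩, hr⟩ := e
    refine Or.inr ⟨takeP P n, rfl, ?_⟩
    show (P.edges.take n).length = n
    rw [List.length_take]
    exact min_eq_left h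

theorem vIdem_mem_Fset {g : GIS src rng} (hg : g ≠ 0) {n : ℕ} (h : n ≤ vLen g) :
    vIdem n g ∈ Fset src rng n := by
  cases g with
  | none => exact absurd rfl hg
  | some e =>
    obtain ⟨⟨P, Q⟩, hr⟩ := e
    refine Or.inr ⟨takeP Q n, rfl, ?_⟩
    show (Q.edges.take n).length = n
    rw [List.length_take]
    exact min_eq_left h

theorem takeP_len (P : GPath src rng) : takeP P P.edges.length = P :=
  gpath_ext rfl List.take_length

theorem comp_eq_both {g : GIS src rng} (hg : g ≠ 0) {w z : GPath src rng}
    (h2 : uIdem (uLen g) g = idemP w) (h4 : vIdem (vLen g) g = idemP z) :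
    ∃ hq : w.range = z.range, g = elm w z hq := by
  cases g with
  | none => exact absurd rfl hg
  | some e =>
    obtain ⟨⟨P, Q⟩, hr⟩ := e
    have hPw : P = w := by
      have h2' : idemP (takeP P P.edges.length) = idemP w := h2
      rw [takeP_len] at h2'
      exact idemP_inj h2'
    have hQz : Q = z := by
      have h4' : idemP (takeP Q Q.edges.length) = idemP z := h4
      rw [takeP_len] at h4'
      exact idemP_inj h4'
    subst hPw
    subst hQz
    exact ⟨hr, rfl⟩

theorem ultra_const_of_bounded {α : Type*} (W : Ultrafilter α) (F : α → ℕ) :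
    ∀ n : ℕ, (∀ᶠ a in (W : Filter α), F a < n) →
      ∃ m, ∀ᶠ a in (W : Filter α), F a = m := by
  intro n
  induction n with
  | zero =>
    intro h
    obtain ⟨a, ha⟩ := h.exists
    omega
  | succ n ih =>
    intro h
    by_cases hn : ∀ᶠ a in (W : Filter α), F a = n
    · exact ⟨n, hn⟩
    · have hne : ∀ᶠ a in (W : Filter α), ¬(F a = n) :=
        Ultrafilter.eventually_not.mpr hn
      exact ih ((h.and hne).mono fun a ha => by omega)

end GISAux

open GISPaper in
/-- Let `G(E)` carry a Hausdorff topology `τ` with jointly continuous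
multiplication such that the set of idempotents of `G(E)` is compact. Then for every
Hausdorff topological semigroup `S` containing `G(E)` as a subsemigroup whose subspace
topology is `τ`, the set `G(E)` is closed in `S`. -/
theorem statement5 {V E : Type*} (src rng : E → V)
    (τ : TopologicalSpace (GIS src rng)) (hT2 : @T2Space _ τ)
    (hcont : @Continuous _ _ (@instTopologicalSpaceProd _ _ τ τ) τ
      (fun p : GIS src rng × GIS src rng => p.1 * p.2))
    (hidem : @IsCompact _ τ {x : GIS src rng | x * x = x})
    {S : Type*} [TopologicalSpace S] [T2Space S] [Mul S]
    (hassoc : ∀ a b c : S, a * b * c = a * (b * c))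
    (hSmul : Continuous (fun p : S × S => p.1 * p.2))
    (ι : GIS src rng → S) (hinj : Function.Injective ι)
    (hhom : ∀ x y : GIS src rng, ι (x * y) = ι x * ι y)
    (hind : @Topology.IsInducing _ _ τ _ ι) :
    IsClosed (Set.range ι) := by
  classical
  letI := τ
  haveI := hT2
  have hι : Continuous ι := hind.continuous
  refine isClosed_of_closure_subset fun x hx => ?_
  -- set up an ultrafilter on G(E) whose image converges to x
  have hcp : ClusterPt x (Filter.principal (Set.range ι)) :=
    mem_closure_iff_clusterPt.mp hx
  haveI : (nhds x ⊓ Filter.principal (Set.range ι)).NeBot := hcp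
  obtain ⟨U, hU⟩ := Ultrafilter.exists_le (nhds x ⊓ Filter.principal (Set.range ι))
  have hUx : (U : Filter S) ≤ nhds x := hU.trans inf_le_left
  have hUr : ∀ᶠ s in (U : Filter S), s ∈ Set.range ι :=
    Filter.le_principal_iff.mp (hU.trans inf_le_right)
  haveI : Nonempty (GISPaper.GIS src rng) := ⟨0⟩
  set f : S → GISPaper.GIS src rng := Function.invFun ι with hfdef
  set W : Ultrafilter (GISPaper.GIS src rng) := U.map f with hWdef
  have hae : ∀ᶠ s in (U : Filter S), ι (f s) = s :=
    hUr.mono fun s hs => Function.invFun_eq hs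
  have hWx : Filter.Tendsto ι (W : Filter (GISPaper.GIS src rng)) (nhds x) := by
    rw [hWdef, Ultrafilter.coe_map, Filter.tendsto_map'_iff]
    have hid : Filter.Tendsto id (U : Filter S) (nhds x) := hUx
    exact hid.congr' (hae.mono fun s h => h.symm)
  -- basic zero identities
  have hz1 : ι 0 * x = ι 0 := by
    have t1 : Filter.Tendsto (fun g : GISPaper.GIS src rng => ι ((0 : GISPaper.GIS src rng) * g))
        (W : Filter _) (nhds (ι 0 * x)) :=
      GISAux.tendsto_mul_aux ι hhom hSmul tendsto_const_nhds hWx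
    have t2 : Filter.Tendsto (fun g : GISPaper.GIS src rng => ι ((0 : GISPaper.GIS src rng) * g))
        (W : Filter _) (nhds (ι 0)) :=
      tendsto_const_nhds.congr fun g => by rw [GIS.zero_mul]
    exact tendsto_nhds_unique t1 t2
  have hz2 : x * ι 0 = ι 0 := by
    have t1 : Filter.Tendsto (fun g : GISPaper.GIS src rng => ι (g * (0 : GISPaper.GIS src rng)))
        (W : Filter _) (nhds (x * ι 0)) :=
      GISAux.tendsto_mul_aux ι hhom hSmul hWx tendsto_const_nhds
    have t2 : Filter.Tendsto (fun g : GISPaper.GIS src rng => ι (g * (0 : GISPaper.GIS src rng)))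
        (W : Filter _) (nhds (ι 0)) :=
      tendsto_const_nhds.congr fun g => by rw [GISAux.mul_zero']
    exact tendsto_nhds_unique t1 t2
  -- case: W concentrates on 0
  by_cases hZ : ∀ᶠ g in (W : Filter (GISPaper.GIS src rng)), g = 0
  · have t2 : Filter.Tendsto ι (W : Filter _) (nhds (ι 0)) :=
      tendsto_const_nhds.congr' (hZ.mono fun g hg => by rw [hg])
    exact ⟨0, tendsto_nhds_unique t2 hWx⟩
  have hne : ∀ᶠ g in (W : Filter (GISPaper.GIS src rng)), g ≠ 0 :=
    Ultrafilter.eventually_not.mpr hZ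
  -- LEFT dichotomy
  by_cases hAL : ∀ n : ℕ, ∀ᶠ g in (W : Filter (GISPaper.GIS src rng)), n ≤ GISAux.uLen g
  · -- left lengths unbounded : x = ι 0
    obtain ⟨δ, hδT, hδ0⟩ := GISAux.chain_aux τ hT2 hcont hidem hSmul ι hinj hhom hind W
      (fun n => GISAux.uIdem n)
      (fun n => (hne.and (hAL n)).mono fun g hg => GISAux.uIdem_mem_Fset hg.1 hg.2)
      (fun m n hmn => hne.mono fun g hg => GISAux.uIdem_chain hg hmn)
    have hx1 : ∀ n : ℕ, ι (δ n) * x = x := by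
      intro n
      have t1 : Filter.Tendsto (fun g => ι (GISAux.uIdem n g * g)) (W : Filter _)
          (nhds (ι (δ n) * x)) := GISAux.tendsto_mul_aux ι hhom hSmul (hδT n) hWx
      have t2 : Filter.Tendsto (fun g => ι (GISAux.uIdem n g * g)) (W : Filter _)
          (nhds x) := hWx.congr' (hne.mono fun g hg => by simp only [GISAux.uIdem_mul hg n])
      exact tendsto_nhds_unique t1 t2
    have t3 : Filter.Tendsto (fun n : ℕ => ι (δ n) * x) Filter.atTop (nhds (ι 0 * x)) :=
      (hSmul.tendsto (ι 0, x)).comp (hδ0.prodMk_nhds tendsto_const_nhds)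
    have t4 : Filter.Tendsto (fun n : ℕ => ι (δ n) * x) Filter.atTop (nhds x) :=
      tendsto_const_nhds.congr fun n => (hx1 n).symm
    exact ⟨0, ((tendsto_nhds_unique t4 t3).trans hz1).symm⟩
  -- left lengths bounded: eventually constant
  push_neg at hAL
  obtain ⟨n0, hn0⟩ := hAL
  obtain ⟨nL, hnL⟩ := GISAux.ultra_const_of_bounded W GISAux.uLen n0
    (hn0.mono fun g hg => by omega)
  -- RIGHT dichotomy
  by_cases hAR : ∀ n : ℕ, ∀ᶠ g in (W : Filter (GISPaper.GIS src rng)), n ≤ GISAux.vLen g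
  · -- right lengths unbounded : x = ι 0
    obtain ⟨δ, hδT, hδ0⟩ := GISAux.chain_aux τ hT2 hcont hidem hSmul ι hinj hhom hind W
      (fun n => GISAux.vIdem n)
      (fun n => (hne.and (hAR n)).mono fun g hg => GISAux.vIdem_mem_Fset hg.1 hg.2)
      (fun m n hmn => hne.mono fun g hg => GISAux.vIdem_chain hg hmn)
    have hx1 : ∀ n : ℕ, x * ι (δ n) = x := by
      intro n
      have t1 : Filter.Tendsto (fun g => ι (g * GISAux.vIdem n g)) (W : Filter _)
          (nhds (x * ι (δ n))) := GISAux.tendsto_mul_aux ι hhom hSmul hWx (hδT n)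
      have t2 : Filter.Tendsto (fun g => ι (g * GISAux.vIdem n g)) (W : Filter _)
          (nhds x) := hWx.congr' (hne.mono fun g hg => by simp only [GISAux.mul_vIdem hg n])
      exact tendsto_nhds_unique t1 t2
    have t3 : Filter.Tendsto (fun n : ℕ => x * ι (δ n)) Filter.atTop (nhds (x * ι 0)) :=
      (hSmul.tendsto (x, ι 0)).comp (tendsto_const_nhds.prodMk_nhds hδ0)
    have t4 : Filter.Tendsto (fun n : ℕ => x * ι (δ n)) Filter.atTop (nhds x) :=
      tendsto_const_nhds.congr fun n => (hx1 n).symm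
    exact ⟨0, ((tendsto_nhds_unique t4 t3).trans hz2).symm⟩
  push_neg at hAR
  obtain ⟨m0, hm0⟩ := hAR
  obtain ⟨nR, hnR⟩ := GISAux.ultra_const_of_bounded W GISAux.vLen m0
    (hm0.mono fun g hg => by omega)
  -- both sides bounded: limits on both sides
  obtain ⟨dL, hdLF, hdLT⟩ := GISAux.ultra_limit hι (GISAux.Fset_compact τ hT2 hcont hidem nL)
    W (GISAux.uIdem nL)
    ((hne.and hnL).mono fun g hg => GISAux.uIdem_mem_Fset hg.1 (le_of_eq hg.2.symm))
  obtain ⟨dR, hdRF, hdRT⟩ := GISAux.ultra_limit hι (GISAux.Fset_compact τ hT2 hcont hidem nR)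
    W (GISAux.vIdem nR)
    ((hne.and hnR).mono fun g hg => GISAux.vIdem_mem_Fset hg.1 (le_of_eq hg.2.symm))
  have hxL : ι dL * x = x := by
    have t1 : Filter.Tendsto (fun g => ι (GISAux.uIdem nL g * g)) (W : Filter _)
        (nhds (ι dL * x)) := GISAux.tendsto_mul_aux ι hhom hSmul hdLT hWx
    have t2 : Filter.Tendsto (fun g => ι (GISAux.uIdem nL g * g)) (W : Filter _)
        (nhds x) := hWx.congr' (hne.mono fun g hg => by simp only [GISAux.uIdem_mul hg nL])
    exact tendsto_nhds_unique t1 t2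
  have hxR : x * ι dR = x := by
    have t1 : Filter.Tendsto (fun g => ι (g * GISAux.vIdem nR g)) (W : Filter _)
        (nhds (x * ι dR)) := GISAux.tendsto_mul_aux ι hhom hSmul hWx hdRT
    have t2 : Filter.Tendsto (fun g => ι (g * GISAux.vIdem nR g)) (W : Filter _)
        (nhds x) := hWx.congr' (hne.mono fun g hg => by simp only [GISAux.mul_vIdem hg nR])
    exact tendsto_nhds_unique t1 t2
  rcases hdLF with hz | ⟨w, hw, hwlen⟩
  · -- dL = 0 : x = ι 0
    rw [hz] at hxL
    exact ⟨0, (hxL.symm.trans hz1).symm⟩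
  rcases hdRF with hz | ⟨z, hzz, hzlen⟩
  · rw [hz] at hxR
    exact ⟨0, (hxR.symm.trans hz2).symm⟩
  subst hw
  subst hzz
  -- constancy of the left component
  have hconstL : ∀ᶠ g in (W : Filter (GISPaper.GIS src rng)),
      GISAux.uIdem nL g = GISAux.idemP w := by
    by_contra hcc
    have hne2 : ∀ᶠ g in (W : Filter _), GISAux.uIdem nL g ≠ GISAux.idemP w :=
      Ultrafilter.eventually_not.mpr hcc
    have hsubK : GISAux.Fset src rng nL \ {GISAux.idemP w} ⊆ {y : GISPaper.GIS src rng | y * y = y} :=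
      fun a ha => GISAux.Fset_subset_idem nL ha.1
    have hA'cl : IsClosed (GISAux.Fset src rng nL \ {GISAux.idemP w}) :=
      GISAux.ortho_closed hcont hidem
        ⟨Or.inl rfl, fun h => GISAux.idemP_ne_zero w (Set.mem_singleton_iff.mp h).symm⟩
        hsubK (fun a ha b hb hab => GISAux.Fset_orth ha.1 hb.1 hab)
    have hA'cp : IsCompact (GISAux.Fset src rng nL \ {GISAux.idemP w}) :=
      hidem.of_isClosed_subset hA'cl hsubK
    obtain ⟨d', hd'A, hd'T⟩ := GISAux.ultra_limit hι hA'cp W (GISAux.uIdem nL)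
      (((hne.and hnL).and hne2).mono fun g hg =>
        ⟨GISAux.uIdem_mem_Fset hg.1.1 (le_of_eq hg.1.2.symm), hg.2⟩)
    have heq : ι d' = ι (GISAux.idemP w) := tendsto_nhds_unique hd'T hdLT
    exact hd'A.2 (Set.mem_singleton_iff.mpr (hinj heq))
  have hconstR : ∀ᶠ g in (W : Filter (GISPaper.GIS src rng)),
      GISAux.vIdem nR g = GISAux.idemP z := by
    by_contra hcc
    have hne2 : ∀ᶠ g in (W : Filter _), GISAux.vIdem nR g ≠ GISAux.idemP z :=
      Ultrafilter.eventually_not.mpr hcc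
    have hsubK : GISAux.Fset src rng nR \ {GISAux.idemP z} ⊆ {y : GISPaper.GIS src rng | y * y = y} :=
      fun a ha => GISAux.Fset_subset_idem nR ha.1
    have hA'cl : IsClosed (GISAux.Fset src rng nR \ {GISAux.idemP z}) :=
      GISAux.ortho_closed hcont hidem
        ⟨Or.inl rfl, fun h => GISAux.idemP_ne_zero z (Set.mem_singleton_iff.mp h).symm⟩
        hsubK (fun a ha b hb hab => GISAux.Fset_orth ha.1 hb.1 hab)
    have hA'cp : IsCompact (GISAux.Fset src rng nR \ {GISAux.idemP z}) :=
      hidem.of_isClosed_subset hA'cl hsubK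
    obtain ⟨d', hd'A, hd'T⟩ := GISAux.ultra_limit hι hA'cp W (GISAux.vIdem nR)
      (((hne.and hnR).and hne2).mono fun g hg =>
        ⟨GISAux.vIdem_mem_Fset hg.1.1 (le_of_eq hg.1.2.symm), hg.2⟩)
    have heq : ι d' = ι (GISAux.idemP z) := tendsto_nhds_unique hd'T hdRT
    exact hd'A.2 (Set.mem_singleton_iff.mpr (hinj heq))
  -- W concentrates on the single element elm w z
  have hEx : ∀ᶠ g in (W : Filter (GISPaper.GIS src rng)),
      ∃ hq : w.range = z.range, g = GISAux.elm w z hq := by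
    filter_upwards [hne, hnL, hnR, hconstL, hconstR] with g hg h1 h2 h3 h4
    exact GISAux.comp_eq_both hg (by rw [h1]; exact h3) (by rw [h2]; exact h4)
  obtain ⟨g1, hg1⟩ := hEx.exists
  obtain ⟨h₀, -⟩ := hg1
  have hconst2 : ∀ᶠ g in (W : Filter _), g = GISAux.elm w z h₀ :=
    hEx.mono fun g hg => by obtain ⟨hq, rfl⟩ := hg; rfl
  have t2 : Filter.Tendsto ι (W : Filter _) (nhds (ι (GISAux.elm w z h₀))) :=
    tendsto_const_nhds.congr' (hconst2.mono fun g hg => by rw [hg])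
  exact ⟨GISAux.elm w z h₀, tendsto_nhds_unique t2 hWx⟩
end

section
/- Let a graph inverse semigroup G(E) be a dense subsemigroup of a Hausdorff CLP-compact topological semigroup S. Then for every open neighborhood U of 0 in S, the set of vertices e ∈ E⁰ through which a cycle passes and for which there exists a nonzero element uv⁻¹ ∈ G(E) \ U with r(u) = r(v) = e is finite. -/
namespace GISPaper

variable {V E : Type*} {src rng : E → V}

/-- The trivial path at a vertex. -/
def triv (src rng : E → V) (e : V) : GPath src rng := ⟨e, [], trivial⟩

theorem triv_range (e : V) : (triv src rng e).range = e := rfl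

theorem GPath.ext' {p q : GPath src rng} (h1 : p.start = q.start)
    (h2 : p.edges = q.edges) : p = q := by
  cases p; cases q; dsimp at h1 h2; subst h1; subst h2; rfl

/-- Concatenation of paths. -/
def comp (p q : GPath src rng) (h : p.range = q.start) : GPath src rng :=
  ⟨p.start, p.edges ++ q.edges, by
    rw [isPathFrom_append]
    refine ⟨p.isPath, ?_⟩
    have hh : pathEnd rng p.start p.edges = q.start := h
    rw [hh]; exact q.isPath⟩

theorem comp_edges (p q : GPath src rng) (h) : (comp p q h).edges = p.edges ++ q.edges := rfl

theorem comp_start (p q : GPath src rng) (h) : (comp p q h).start = p.start := rfl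

theorem comp_range (p q : GPath src rng) (h) : (comp p q h).range = q.range := by
  show pathEnd rng p.start (p.edges ++ q.edges) = q.range
  rw [pathEnd_append]
  have hh : pathEnd rng p.start p.edges = q.start := h
  rw [hh]; rfl

/-- Inclusion of nonzero elements. -/
def ofElem (g : GISElem src rng) : GIS src rng := some g

theorem ofElem_injective : Function.Injective (ofElem : GISElem src rng → GIS src rng) :=
  fun _ _ h => Option.some.inj h

/-- A nonzero element of the graph inverse semigroup. -/
def elem (p q : GPath src rng) (h : p.range = q.range) : GIS src rng := some ⟨(p, q), h⟩

theorem elem_eq_ofElem (p q : GPath src rng) (h) : elem p q h = ofElem ⟨(p, q), h⟩ := rfl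

theorem elem_eq_elem {p q p' q' : GPath src rng} {h : p.range = q.range}
    {h' : p'.range = q'.range}
    (hps : p.start = p'.start) (hpe : p.edges = p'.edges)
    (hqs : q.start = q'.start) (hqe : q.edges = q'.edges) :
    elem p q h = elem p' q' h' := by
  obtain rfl := GPath.ext' hps hpe
  obtain rfl := GPath.ext' hqs hqe
  rfl

theorem elem_ne_zero (p q : GPath src rng) (h) : (elem p q h : GIS src rng) ≠ 0 := by
  intro hh
  exact Option.some_ne_none _ (show (some ⟨(p, q), h⟩ : Option (GISElem src rng)) = none from hh)

theorem ofElem_ne_zero (g : GISElem src rng) : ofElem g ≠ 0 := by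
  intro hh
  exact Option.some_ne_none _ (show (some g : Option (GISElem src rng)) = none from hh)

theorem gis_mul_zero (x : GIS src rng) : x * 0 = 0 := by
  obtain _ | ⟨⟨u, v⟩, h⟩ := x <;> rfl

/-- Trivial-path midpoints multiply away. -/
theorem mul_triv_mid (p q : GPath src rng) (e : V)
    (h₁ : p.range = (triv src rng e).range) (h₂ : (triv src rng e).range = q.range) :
    (elem p (triv src rng e) h₁ * elem (triv src rng e) q h₂ : GIS src rng)
      = elem p q (h₁.trans h₂) := by
  show GIS.mul _ _ = _
  unfold GIS.mul
  dsimp only [elem]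
  rw [dif_pos ⟨rfl, List.prefix_refl _⟩]
  exact elem_eq_elem rfl (by simp [triv]) rfl rfl

/-- Vertex idempotents at distinct vertices are orthogonal. -/
theorem mul_eps_ne (a b : V) (hne : a ≠ b) :
    (elem (triv src rng a) (triv src rng a) rfl
      * elem (triv src rng b) (triv src rng b) rfl : GIS src rng) = 0 := by
  show GIS.mul _ _ = (0 : GIS src rng)
  unfold GIS.mul
  dsimp only [elem]
  rw [dif_neg (fun h => hne h.1), dif_neg (fun h => hne h.1.symm)]
  rfl

theorem mul_comp_left (μ ν γ : GPath src rng) (hr : μ.range = ν.range)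
    (h1 : μ.range = γ.start) (h2 : ν.range = γ.start) (hne : γ.edges ≠ [])
    (hdd : (comp μ γ h1).range = (comp μ γ h1).range)
    (hcc : (comp μ γ h1).range = (comp ν γ h2).range) :
    (elem (comp μ γ h1) (comp μ γ h1) hdd * elem μ ν hr : GIS src rng)
      = elem (comp μ γ h1) (comp ν γ h2) hcc := by
  show GIS.mul _ _ = _
  unfold GIS.mul
  dsimp only [elem]
  rw [dif_neg, dif_pos ⟨rfl, List.prefix_append _ _⟩]
  · refine elem_eq_elem rfl rfl rfl ?_
    show ν.edges ++ (μ.edges ++ γ.edges).drop μ.edges.length = ν.edges ++ γ.edges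
    rw [List.drop_left]
  · rintro ⟨-, hpre⟩
    have hl := hpre.length_le
    have hl2 : (μ.edges ++ γ.edges).length ≤ μ.edges.length := hl
    simp only [List.length_append] at hl2
    have : γ.edges.length = 0 := by omega
    exact hne (List.length_eq_zero_iff.mp this)

theorem mul_comp_right (μ ν γ : GPath src rng) (hr : μ.range = ν.range)
    (h1 : μ.range = γ.start) (h2 : ν.range = γ.start)
    (hdd : (comp ν γ h2).range = (comp ν γ h2).range)
    (hcc : (comp μ γ h1).range = (comp ν γ h2).range) :
    (elem μ ν hr * elem (comp ν γ h2) (comp ν γ h2) hdd : GIS src rng)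
      = elem (comp μ γ h1) (comp ν γ h2) hcc := by
  show GIS.mul _ _ = _
  unfold GIS.mul
  dsimp only [elem]
  rw [dif_pos ⟨rfl, List.prefix_append _ _⟩]
  refine elem_eq_elem rfl ?_ rfl rfl
  show μ.edges ++ (ν.edges ++ γ.edges).drop ν.edges.length = μ.edges ++ γ.edges
  rw [List.drop_left]

theorem dichot_left (d : GPath src rng) (hd : d.range = d.range) (g : GISElem src rng)
    (hne : (elem d d hd * ofElem g : GIS src rng) ≠ 0) :
    (g.1.1.start = d.start ∧ g.1.1.edges <+: d.edges)
      ∨ (elem d d hd * ofElem g : GIS src rng) = ofElem g := by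
  obtain ⟨⟨a, b⟩, hab⟩ := g
  by_cases hc1 : d.start = a.start ∧ d.edges <+: a.edges
  · right
    show GIS.mul _ _ = _
    unfold GIS.mul
    dsimp only [elem, ofElem]
    rw [dif_pos hc1]
    refine elem_eq_elem hc1.1 ?_ rfl rfl
    obtain ⟨t, ht⟩ := hc1.2
    show d.edges ++ a.edges.drop d.edges.length = a.edges
    rw [← ht, List.drop_left]
  · by_cases hc2 : a.start = d.start ∧ a.edges <+: d.edges
    · left; exact hc2
    · exfalso
      apply hne
      show GIS.mul _ _ = (0 : GIS src rng)
      unfold GIS.mul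
      dsimp only [elem, ofElem]
      rw [dif_neg hc1, dif_neg hc2]
      rfl

theorem dichot_right (d : GPath src rng) (hd : d.range = d.range) (g : GISElem src rng)
    (hne : (ofElem g * elem d d hd : GIS src rng) ≠ 0) :
    (g.1.2.start = d.start ∧ g.1.2.edges <+: d.edges)
      ∨ (ofElem g * elem d d hd : GIS src rng) = ofElem g := by
  obtain ⟨⟨a, b⟩, hab⟩ := g
  by_cases hc1 : b.start = d.start ∧ b.edges <+: d.edges
  · left; exact hc1
  · by_cases hc2 : d.start = b.start ∧ d.edges <+: b.edges
    · right
      show GIS.mul _ _ = _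
      unfold GIS.mul
      dsimp only [elem, ofElem]
      rw [dif_neg hc1, dif_pos hc2]
      refine elem_eq_elem rfl rfl hc2.1 ?_
      obtain ⟨t, ht⟩ := hc2.2
      show d.edges ++ b.edges.drop d.edges.length = b.edges
      rw [← ht, List.drop_left]
    · exfalso
      apply hne
      show GIS.mul _ _ = (0 : GIS src rng)
      unfold GIS.mul
      dsimp only [elem, ofElem]
      rw [dif_neg hc1, dif_neg hc2]
      rfl

end GISPaper

namespace GISPaper

variable {V E : Type*} {src rng : E → V}

theorem finite_prefixes (X : List E) : {l : List E | l <+: X}.Finite := by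
  apply (X.inits.finite_toSet).subset
  intro l hl
  simpa [List.mem_inits] using hl

/-- The pair of edge lists of an element. -/
def edgesOf (g : GIS src rng) : List E × List E :=
  match g with
  | none => ([], [])
  | some p => (p.1.1.edges, p.1.2.edges)

theorem finite_elems (s₁ s₂ : V) (X Y : List E) :
    {g : GIS src rng | ∃ p : GISElem src rng, g = ofElem p ∧ p.1.1.start = s₁ ∧
      p.1.1.edges <+: X ∧ p.1.2.start = s₂ ∧ p.1.2.edges <+: Y}.Finite := by
  have hfin : (({l : List E | l <+: X} ×ˢ {l : List E | l <+: Y}) : Set (List E × List E)).Finite :=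
    (finite_prefixes X).prod (finite_prefixes Y)
  refine Set.Finite.of_finite_image (f := edgesOf) (hfin.subset ?_) ?_
  · rintro _ ⟨g, ⟨p, rfl, _, hpX, _, hpY⟩, rfl⟩
    exact ⟨hpX, hpY⟩
  · rintro g ⟨p, rfl, hs1, _, hs2, _⟩ g' ⟨p', rfl, hs1', _, hs2', _⟩ hee
    obtain ⟨⟨a, b⟩, hab⟩ := p
    obtain ⟨⟨a', b'⟩, hab'⟩ := p'
    have h1 : a.edges = a'.edges := congrArg Prod.fst hee
    have h2 : b.edges = b'.edges := congrArg Prod.snd hee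
    have ha : a = a' := GPath.ext' (hs1.trans hs1'.symm) h1
    have hb : b = b' := GPath.ext' (hs2.trans hs2'.symm) h2
    subst ha; subst hb
    rfl

end GISPaper

namespace GISPaper

variable {V E : Type*} {src rng : E → V}
variable {S : Type*} [TopologicalSpace S] [T2Space S] [Mul S]

theorem cont2 (hSmul : Continuous (fun p : S × S => p.1 * p.2))
    {a b : S} {W : Set S} (hW : IsOpen W) (hab : a * b ∈ W) :
    ∃ O₁ O₂ : Set S, IsOpen O₁ ∧ IsOpen O₂ ∧ a ∈ O₁ ∧ b ∈ O₂ ∧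
      ∀ x ∈ O₁, ∀ y ∈ O₂, x * y ∈ W := by
  have hpre := hSmul.isOpen_preimage W hW
  rw [isOpen_prod_iff] at hpre
  obtain ⟨O₁, O₂, h1, h2, ha, hb, hsub⟩ := hpre a b hab
  exact ⟨O₁, O₂, h1, h2, ha, hb, fun x hx y hy => hsub (Set.mk_mem_prod hx hy)⟩

theorem acc_pick {x : S} {C : Set S} (hx : AccPt x (Filter.principal C))
    {U : Set S} (hU : U ∈ nhds x) {F : Set S} (hF : F.Finite) :
    ∃ y, y ∈ U ∧ y ∈ C ∧ y ∉ F ∧ y ≠ x := by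
  have hop : IsOpen ((F \ {x})ᶜ) := (hF.subset Set.diff_subset).isClosed.isOpen_compl
  have hmem : x ∈ (F \ {x})ᶜ := by simp
  have hU' : U ∩ (F \ {x})ᶜ ∈ nhds x := Filter.inter_mem hU (hop.mem_nhds hmem)
  obtain ⟨y, hy, hyne⟩ := accPt_iff_nhds.mp hx _ hU'
  refine ⟨y, hy.1.1, hy.2, ?_, hyne⟩
  intro hyF
  exact hy.1.2 ⟨hyF, hyne⟩

/-- In a CLP-compact space, an infinite set of isolated points has an
accumulation point. -/
theorem engine (hCLP : CLPCompact S) {X : Set S} (hinf : X.Infinite)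
    (hiso : ∀ x ∈ X, IsOpen ({x} : Set S)) :
    ∃ s : S, AccPt s (Filter.principal X) := by
  by_contra hno
  push_neg at hno
  have hXcl : IsClosed X := by
    rw [← closure_subset_iff_isClosed]
    intro t ht
    by_contra htX
    refine hno t (accPt_iff_nhds.mpr ?_)
    intro U hU
    obtain ⟨y, hyU, hyX⟩ := mem_closure_iff_nhds.mp ht U hU
    exact ⟨y, ⟨hyU, hyX⟩, fun h => htX (h ▸ hyX)⟩
  have hXop : IsOpen X := by
    rw [isOpen_iff_forall_mem_open]
    intro x hx
    exact ⟨{x}, by simpa using hx, hiso x hx, rfl⟩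
  set 𝒰 : Set (Set S) := insert Xᶜ ((fun x => ({x} : Set S)) '' X) with h𝒰
  have hclopen : ∀ W ∈ 𝒰, IsClopen W := by
    rintro W (rfl | ⟨x, hx, rfl⟩)
    · exact ⟨hXop.isClosed_compl, hXcl.isOpen_compl⟩
    · exact ⟨isClosed_singleton, hiso x hx⟩
  have hcover : ⋃₀ 𝒰 = Set.univ := by
    apply Set.eq_univ_of_forall
    intro s
    by_cases hs : s ∈ X
    · exact ⟨{s}, Or.inr ⟨s, hs, rfl⟩, rfl⟩
    · exact ⟨Xᶜ, Or.inl rfl, hs⟩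
  obtain ⟨ℱ, hℱsub, hℱfin, hℱcov⟩ := hCLP 𝒰 hclopen hcover
  have hTfin : {x ∈ X | ({x} : Set S) ∈ ℱ}.Finite := by
    refine Set.Finite.of_finite_image (f := fun x => ({x} : Set S)) (hℱfin.subset ?_) ?_
    · rintro _ ⟨x, hx, rfl⟩
      exact hx.2
    · exact fun a _ b _ h => Set.singleton_injective h
  obtain ⟨x₀, hx₀X, hx₀T⟩ := (hinf.diff hTfin).nonempty
  have : x₀ ∈ ⋃₀ ℱ := hℱcov ▸ Set.mem_univ x₀
  obtain ⟨W, hWℱ, hx₀W⟩ := this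
  rcases hℱsub hWℱ with rfl | ⟨x₁, hx₁, rfl⟩
  · exact hx₀W hx₀X
  · obtain rfl : x₁ = x₀ := hx₀W.symm
    exact hx₀T ⟨hx₀X, hWℱ⟩

end GISPaper

namespace GISPaper
set_option linter.unusedSectionVars false

variable {V E : Type*} {src rng : E → V}
variable {S : Type*} [TopologicalSpace S] [T2Space S] [Mul S]

theorem zero_mul_S (hSmul : Continuous (fun p : S × S => p.1 * p.2))
    (ι : GIS src rng → S)
    (hhom : ∀ x y : GIS src rng, ι (x * y) = ι x * ι y)
    (hdense : DenseRange ι) (s : S) : ι 0 * s = ι 0 := by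
  have hcl : IsClosed {s : S | ι 0 * s = ι 0} :=
    isClosed_eq (hSmul.comp (continuous_const.prodMk continuous_id)) continuous_const
  have hsub : Set.range ι ⊆ {s : S | ι 0 * s = ι 0} := by
    rintro _ ⟨y, rfl⟩
    show ι 0 * ι y = ι 0
    rw [← hhom, GIS.zero_mul]
  have : closure (Set.range ι) ⊆ {s : S | ι 0 * s = ι 0} := hcl.closure_subset_iff.mpr hsub
  exact this (hdense s)

theorem mul_zero_S (hSmul : Continuous (fun p : S × S => p.1 * p.2))
    (ι : GIS src rng → S)
    (hhom : ∀ x y : GIS src rng, ι (x * y) = ι x * ι y)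
    (hdense : DenseRange ι) (s : S) : s * ι 0 = ι 0 := by
  have hcl : IsClosed {s : S | s * ι 0 = ι 0} :=
    isClosed_eq (hSmul.comp (continuous_id.prodMk continuous_const)) continuous_const
  have hsub : Set.range ι ⊆ {s : S | s * ι 0 = ι 0} := by
    rintro _ ⟨y, rfl⟩
    show ι y * ι 0 = ι 0
    rw [← hhom, gis_mul_zero]
  have : closure (Set.range ι) ⊆ {s : S | s * ι 0 = ι 0} := hcl.closure_subset_iff.mpr hsub
  exact this (hdense s)

/-- Isolation lemma: a nonzero element whose ranges carry a cycle `γ` is an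
isolated point of `S`. -/
theorem isolated_elem
    (hSmul : Continuous (fun p : S × S => p.1 * p.2))
    (ι : GIS src rng → S) (hinj : Function.Injective ι)
    (hhom : ∀ x y : GIS src rng, ι (x * y) = ι x * ι y)
    (hdense : DenseRange ι)
    (μ ν : GPath src rng) (hr : μ.range = ν.range)
    (γ : GPath src rng) (h1 : μ.range = γ.start) (hγr : γ.range = μ.range)
    (hγne : γ.edges ≠ []) :
    IsOpen ({ι (elem μ ν hr)} : Set S) := by
  have h2 : ν.range = γ.start := hr ▸ h1
  set μc := comp μ γ h1 with hμc
  set νc := comp ν γ h2 with hνc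
  have hcc : μc.range = νc.range := by rw [comp_range, comp_range]
  set x₀ := ι (elem μ ν hr) with hx₀
  set wpt := ι (elem μc νc hcc) with hwpt
  set z := ι 0 with hz
  -- distinctness
  have hx₀w : x₀ ≠ wpt := by
    intro h
    have := hinj h
    have hedge : μ.edges = μ.edges ++ γ.edges := by
      have h' := Option.some.inj this
      have h2' := congrArg (fun q : GISElem src rng => q.1.1.edges) h'
      simpa [hμc, comp_edges] using h2'
    have : γ.edges.length = 0 := by
      have := congrArg List.length hedge
      simp only [List.length_append] at this
      omega
    exact hγne (List.length_eq_zero_iff.mp this)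
  have hzw : z ≠ wpt := by
    intro h
    have := hinj h
    exact Option.some_ne_none _ (show (none : Option (GISElem src rng)) = some _ from this).symm
  -- separation
  obtain ⟨A, B₁, hAop, hB₁op, hx₀A, hwB₁, hAB₁⟩ := t2_separation hx₀w
  obtain ⟨A₂, B₂, hA₂op, hB₂op, hzA₂, hwB₂, hAB₂⟩ := t2_separation hzw
  set B := B₁ ∩ B₂ with hB
  have hBop : IsOpen B := hB₁op.inter hB₂op
  have hwB : wpt ∈ B := ⟨hwB₁, hwB₂⟩
  have hzB : z ∉ B := fun h => (Set.disjoint_left.mp hAB₂ hzA₂) h.2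
  have hABdisj : ∀ s, s ∈ A → s ∉ B := fun s hs h => (Set.disjoint_left.mp hAB₁ hs) h.1
  -- the two continuous maps
  set lam : S → S := fun s => ι (elem μc μc rfl) * s with hlam
  set rho : S → S := fun s => s * ι (elem νc νc rfl) with hrho
  have hlamc : Continuous lam := hSmul.comp (continuous_const.prodMk continuous_id)
  have hrhoc : Continuous rho := hSmul.comp (continuous_id.prodMk continuous_const)
  have hlamx₀ : lam x₀ = wpt := by
    rw [hlam]
    show ι (elem μc μc rfl) * ι (elem μ ν hr) = wpt
    rw [← hhom, mul_comp_left μ ν γ hr h1 h2 hγne rfl hcc]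
  have hrhox₀ : rho x₀ = wpt := by
    rw [hrho]
    show ι (elem μ ν hr) * ι (elem νc νc rfl) = wpt
    rw [← hhom, mul_comp_right μ ν γ hr h1 h2 rfl hcc]
  set O := A ∩ lam ⁻¹' B ∩ rho ⁻¹' B with hO
  have hOop : IsOpen O :=
    (hAop.inter (hlamc.isOpen_preimage B hBop)).inter (hrhoc.isOpen_preimage B hBop)
  have hx₀O : x₀ ∈ O := ⟨⟨hx₀A, by simp only [Set.mem_preimage, hlamx₀]; exact hwB⟩,
    by simp only [Set.mem_preimage, hrhox₀]; exact hwB⟩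
  -- the finite trap
  set Φ : Set (GIS src rng) := {g : GIS src rng | ∃ p : GISElem src rng, g = ofElem p ∧
      p.1.1.start = μ.start ∧ p.1.1.edges <+: μ.edges ++ γ.edges ∧
      p.1.2.start = ν.start ∧ p.1.2.edges <+: ν.edges ++ γ.edges} with hΦ
  have hΦfin : (ι '' Φ).Finite := (finite_elems μ.start ν.start _ _).image ι
  -- every point of ι G in O lies in ι '' Φ or is x₀
  have hkey : ∀ g : GIS src rng, ι g ∈ O → ι g ∈ ι '' Φ ∪ {x₀} := by
    intro g hgO
    obtain ⟨⟨hgA, hglam⟩, hgrho⟩ := hgO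
    rcases g with _ | p
    · exfalso
      have : lam (ι (0 : GIS src rng)) = ι (0 : GIS src rng) := by
        rw [hlam]
        show ι (elem μc μc rfl) * ι 0 = ι 0
        rw [← hhom, gis_mul_zero]
      rw [Set.mem_preimage] at hglam
      have hzB' : ι (0 : GIS src rng) ∈ B := by
        have hg0 : (none : Option (GISElem src rng)) = (0 : GIS src rng) := rfl
        rw [hg0] at hglam
        rwa [this] at hglam
      exact hzB hzB'
    · -- nonzero element
      have hlamg : ι (elem μc μc rfl * ofElem p) ∈ B := by
        rw [hhom]
        exact hglam
      have hrhog : ι (ofElem p * elem νc νc rfl) ∈ B := by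
        rw [hhom]
        exact hgrho
      have hlne : (elem μc μc rfl * ofElem p : GIS src rng) ≠ 0 := by
        intro h0
        rw [h0] at hlamg
        exact hzB hlamg
      have hrne : (ofElem p * elem νc νc rfl : GIS src rng) ≠ 0 := by
        intro h0
        rw [h0] at hrhog
        exact hzB hrhog
      have hL := dichot_left μc rfl p hlne
      have hR := dichot_right νc rfl p hrne
      have hgA' : ι (ofElem p) ∈ A := hgA
      rcases hL with hLpre | hLeq
      · rcases hR with hRpre | hReq
        · left
          exact ⟨ofElem p, ⟨p, rfl, hLpre.1, hLpre.2, hRpre.1, hRpre.2⟩, rfl⟩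
        · exfalso
          rw [hReq] at hrhog
          exact hABdisj _ hgA' hrhog
      · exfalso
        rw [hLeq] at hlamg
        exact hABdisj _ hgA' hlamg
  -- conclude
  have hempty : O \ (ι '' Φ ∪ {x₀}) = ∅ := by
    by_contra hne
    obtain ⟨s, hs⟩ := Set.nonempty_iff_ne_empty.mpr hne
    have hop : IsOpen (O \ (ι '' Φ ∪ {x₀})) :=
      hOop.sdiff ((hΦfin.union (Set.finite_singleton x₀)).isClosed)
    obtain ⟨g, hg⟩ := hdense.exists_mem_open hop ⟨s, hs⟩
    exact hg.2 (hkey g hg.1)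
  have hOsub : O ⊆ ι '' Φ ∪ {x₀} := by
    intro s hs
    by_contra hns
    exact (Set.eq_empty_iff_forall_notMem.mp hempty) s ⟨hs, hns⟩
  have hsing : ({x₀} : Set S) = O \ (ι '' Φ \ {x₀}) := by
    apply Set.eq_of_subset_of_subset
    · intro s hs
      obtain rfl : s = x₀ := hs
      exact ⟨hx₀O, fun h => h.2 rfl⟩
    · intro s hs
      rcases hOsub hs.1 with h | h
      · by_contra hne
        exact hs.2 ⟨h, fun h' => hne h'⟩
      · exact h
  rw [hsing]
  exact hOop.sdiff ((hΦfin.subset Set.diff_subset).isClosed)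

end GISPaper

namespace GISPaper
set_option linter.unusedSectionVars false

variable {V E : Type*} {src rng : E → V}
variable {S : Type*} [TopologicalSpace S] [T2Space S] [Mul S]

/-- Abbreviation: the idempotent of a vertex. -/
noncomputable def epsE (src rng : E → V) (e : V) : GIS src rng :=
  elem (triv src rng e) (triv src rng e) rfl

/-- Key lemma: among any infinite set of cycle vertices, some vertex idempotent
lies in any given neighbourhood of zero. -/
theorem eps_lemma
    (hSmul : Continuous (fun p : S × S => p.1 * p.2))
    (hCLP : CLPCompact S)
    (ι : GIS src rng → S) (hinj : Function.Injective ι)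
    (hhom : ∀ x y : GIS src rng, ι (x * y) = ι x * ι y)
    (hdense : DenseRange ι)
    (M : Set V) (hM : M.Infinite) (hcyc : ∀ e ∈ M, HasCycleAt src rng e)
    (W : Set S) (hW : IsOpen W) (hzW : ι 0 ∈ W) :
    ∃ e ∈ M, ι (epsE src rng e) ∈ W := by
  by_contra hcon
  push_neg at hcon
  set f : V → S := fun e => ι (epsE src rng e) with hf
  have hinjOn : Set.InjOn f M := by
    intro a _ b _ hab
    have h' := Option.some.inj (hinj hab)
    exact congrArg (fun q : GISElem src rng => q.1.1.start) h'
  set X := f '' M with hX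
  have hXinf : X.Infinite := hM.image hinjOn
  have hiso : ∀ x ∈ X, IsOpen ({x} : Set S) := by
    rintro _ ⟨e, he, rfl⟩
    obtain ⟨γ, hγne, hγs, hγr⟩ := hcyc e he
    exact isolated_elem hSmul ι hinj hhom hdense (triv src rng e) (triv src rng e) rfl γ
      ((triv_range e).trans hγs.symm) (hγr.trans (triv_range e).symm) hγne
  obtain ⟨y, hy⟩ := engine hCLP hXinf hiso
  have hsq : ∀ Wy : Set S, IsOpen Wy → y * y ∈ Wy →
      (ι 0 ∈ Wy ∧ ∃ e ∈ M, ι (epsE src rng e) ∈ Wy) := by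
    intro Wy hWyop hWymem
    obtain ⟨O₁, O₂, hO₁, hO₂, hyO₁, hyO₂, hprod⟩ := cont2 hSmul hWyop hWymem
    have hU : O₁ ∩ O₂ ∈ nhds y :=
      Filter.inter_mem (hO₁.mem_nhds hyO₁) (hO₂.mem_nhds hyO₂)
    obtain ⟨y₁, hy₁U, hy₁X, -, -⟩ := acc_pick hy hU (Set.finite_empty)
    obtain ⟨y₂, hy₂U, hy₂X, hy₂F, -⟩ := acc_pick hy hU (Set.finite_singleton y₁)
    obtain ⟨a, haM, rfl⟩ := hy₁X
    obtain ⟨b, hbM, rfl⟩ := hy₂X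
    have hab : a ≠ b := by
      intro h
      exact hy₂F (by rw [h]; rfl)
    constructor
    · have h0 : (epsE src rng a * epsE src rng b : GIS src rng) = 0 :=
        mul_eps_ne a b hab
      have : f a * f b = ι 0 := by
        rw [hf]
        show ι (epsE src rng a) * ι (epsE src rng b) = ι 0
        rw [← hhom, h0]
      rw [← this]
      exact hprod _ hy₁U.1 _ hy₂U.2
    · refine ⟨a, haM, ?_⟩
      have hidem : (epsE src rng a * epsE src rng a : GIS src rng) = epsE src rng a :=
        mul_triv_mid (triv src rng a) (triv src rng a) a rfl rfl
      have : f a * f a = ι (epsE src rng a) := by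
        rw [hf]
        show ι (epsE src rng a) * ι (epsE src rng a) = ι (epsE src rng a)
        rw [← hhom, hidem]
      rw [← this]
      exact hprod _ hy₁U.1 _ hy₁U.2
  have hyy : y * y = ι 0 := by
    by_contra hne
    have hop : IsOpen ({ι 0}ᶜ : Set S) := isClosed_singleton.isOpen_compl
    have := (hsq _ hop (by simpa using hne)).1
    simp at this
  obtain ⟨e, heM, hein⟩ := (hsq W hW (by rw [hyy]; exact hzW)).2
  exact hcon e heM hein

end GISPaper

open GISPaper in
/-- Let a graph inverse semigroup `G(E)` be a dense subsemigroup of a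
Hausdorff CLP-compact topological semigroup `S`. Then for every open neighborhood `U`
of `0` in `S`, the set of vertices `e` through which a cycle passes and for which some
nonzero `uv⁻¹ ∈ G(E) \ U` has `r(u) = r(v) = e` is finite. -/
theorem statement8 {V E : Type*} (src rng : E → V)
    {S : Type*} [TopologicalSpace S] [T2Space S] [Mul S]
    (hassoc : ∀ a b c : S, a * b * c = a * (b * c))
    (hSmul : Continuous (fun p : S × S => p.1 * p.2))
    (hCLP : CLPCompact S)
    (ι : GIS src rng → S) (hinj : Function.Injective ι)
    (hhom : ∀ x y : GIS src rng, ι (x * y) = ι x * ι y)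
    (hdense : DenseRange ι) :
    ∀ U : Set S, IsOpen U → ι 0 ∈ U →
      {e : V | HasCycleAt src rng e ∧
        ∃ p : GISElem src rng, p.1.1.range = e ∧ ι (some p) ∉ U}.Finite := by
  intro U hU hzU
  by_contra hinf
  set B := {e : V | HasCycleAt src rng e ∧
      ∃ p : GISElem src rng, p.1.1.range = e ∧ ι (some p) ∉ U} with hB
  have hBinf : B.Infinite := hinf
  -- choose witnesses
  have hch : ∀ e : V, ∃ (γ u v : GPath src rng) (hr : u.range = v.range)
      (_ : u.range = (triv src rng e).range),
      e ∈ B → (γ.edges ≠ [] ∧ γ.start = e ∧ γ.range = e ∧ ι (elem u v hr) ∉ U) := by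
    intro e
    by_cases he : e ∈ B
    · obtain ⟨⟨γ, hγne, hγs, hγr⟩, p, hre, hUp⟩ := he
      obtain ⟨⟨u, v⟩, hp⟩ := p
      exact ⟨γ, u, v, hp, hre.trans (triv_range e).symm,
        fun _ => ⟨hγne, hγs, hγr, hUp⟩⟩
    · exact ⟨triv src rng e, triv src rng e, triv src rng e, rfl, rfl,
        fun h => absurd h he⟩
  choose γf uf vf hrf huvf hBf using hch
  set uhat : V → GIS src rng := fun e => elem (uf e) (triv src rng e) (huvf e) with huhat
  set vhat : V → GIS src rng :=
    fun e => elem (triv src rng e) (vf e) ((huvf e).symm.trans (hrf e)) with hvhat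
  -- the neighbourhood V of zero with V·V·V ⊆ U
  have hzz : ι (0 : GIS src rng) * ι 0 = ι 0 := by rw [← hhom, GIS.zero_mul]
  obtain ⟨O₁, O₂, hO₁, hO₂, hz₁, hz₂, hp12⟩ := cont2 hSmul hU (by rw [hzz]; exact hzU)
  obtain ⟨O₃, O₄, hO₃, hO₄, hz₃, hz₄, hp34⟩ := cont2 hSmul hO₁ (by rw [hzz]; exact hz₁)
  set Vs := O₂ ∩ (O₃ ∩ O₄) with hVs
  have hVsop : IsOpen Vs := hO₂.inter (hO₃.inter hO₄)
  have hzVs : ι 0 ∈ Vs := ⟨hz₂, hz₃, hz₄⟩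
  have hVs3 : ∀ a ∈ Vs, ∀ b ∈ Vs, ∀ c ∈ Vs, a * b * c ∈ U := by
    intro a ha b hb c hc
    exact hp12 _ (hp34 _ ha.2.1 _ hb.2.2) _ hc.1
  -- the decomposition identity
  have hdecomp : ∀ e : V,
      ι (uhat e) * ι (epsE src rng e) * ι (vhat e) = ι (elem (uf e) (vf e) (hrf e)) := by
    intro e
    have e1 : (uhat e * epsE src rng e : GIS src rng) = uhat e :=
      mul_triv_mid (uf e) (triv src rng e) e (huvf e) rfl
    have e2 : (uhat e * vhat e : GIS src rng) = elem (uf e) (vf e) (hrf e) :=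
      mul_triv_mid (uf e) (vf e) e (huvf e) ((huvf e).symm.trans (hrf e))
    rw [← hhom, ← hhom, e1, e2]
  -- pigeonhole
  set B1 := {e : V | e ∈ B ∧ ι (uhat e) ∉ Vs} with hB1
  set B2 := {e : V | e ∈ B ∧ ι (epsE src rng e) ∉ Vs} with hB2
  set B3 := {e : V | e ∈ B ∧ ι (vhat e) ∉ Vs} with hB3
  have hBsub : B ⊆ B1 ∪ B2 ∪ B3 := by
    intro e he
    by_contra hn
    simp only [Set.mem_union, hB1, hB2, hB3, Set.mem_setOf_eq, not_or] at hn
    push_neg at hn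
    have h1 : ι (uhat e) ∈ Vs := hn.1.1 he
    have h2 : ι (epsE src rng e) ∈ Vs := hn.1.2 he
    have h3 : ι (vhat e) ∈ Vs := hn.2 he
    have := hVs3 _ h1 _ h2 _ h3
    rw [hdecomp e] at this
    exact (hBf e he).2.2.2 this
  have hcycB : ∀ e ∈ B, HasCycleAt src rng e := fun e he => he.1
  have hone : B1.Infinite ∨ B2.Infinite ∨ B3.Infinite := by
    by_contra hc
    push_neg at hc
    exact (hBinf.mono hBsub) (Set.Finite.union (hc.1.union hc.2.1) hc.2.2
      |>.subset (by intro x hx; rcases hx with (h | h) | h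
                    · exact Or.inl (Or.inl h)
                    · exact Or.inl (Or.inr h)
                    · exact Or.inr h))
  rcases hone with hB1inf | hB2inf | hB3inf
  · -- case u-part avoids Vs
    set X := (fun e => ι (uhat e)) '' B1 with hX
    have hinjOn : Set.InjOn (fun e => ι (uhat e)) B1 := by
      intro a _ b _ hab
      have h' := Option.some.inj (hinj hab)
      exact congrArg (fun q : GISElem src rng => q.1.2.start) h'
    have hXinf : X.Infinite := hB1inf.image hinjOn
    have hiso : ∀ x ∈ X, IsOpen ({x} : Set S) := by
      rintro _ ⟨e, he, rfl⟩
      obtain ⟨hγne, hγs, hγr, -⟩ := hBf e he.1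
      have hran : (uf e).range = e := (huvf e).trans (triv_range e)
      exact isolated_elem hSmul ι hinj hhom hdense (uf e) (triv src rng e) (huvf e)
        (γf e) (hran.trans hγs.symm) (hγr.trans hran.symm) hγne
    obtain ⟨x, hx⟩ := engine hCLP hXinf hiso
    have hxz : x * ι 0 ∈ Vs := by
      rw [mul_zero_S hSmul ι hhom hdense x]
      exact hzVs
    obtain ⟨N₁, N₂, hN₁, hN₂, hxN₁, hzN₂, hprodN⟩ := cont2 hSmul hVsop hxz
    set M₁ := {e : V | e ∈ B1 ∧ ι (uhat e) ∈ N₁} with hM₁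
    have hM₁inf : M₁.Infinite := by
      intro hfin
      have hFfin : ((fun e => ι (uhat e)) '' M₁).Finite := hfin.image _
      obtain ⟨y, hyN₁, hyX, hyF, -⟩ := acc_pick hx (hN₁.mem_nhds hxN₁) hFfin
      obtain ⟨e₀, he₀, rfl⟩ := hyX
      exact hyF ⟨e₀, ⟨he₀, hyN₁⟩, rfl⟩
    obtain ⟨e, heM₁, hein⟩ := eps_lemma hSmul hCLP ι hinj hhom hdense M₁ hM₁inf
      (fun e he => hcycB e he.1.1) N₂ hN₂ hzN₂
    have hmem : ι (uhat e) * ι (epsE src rng e) ∈ Vs := hprodN _ heM₁.2 _ hein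
    rw [← hhom] at hmem
    have e1 : (uhat e * epsE src rng e : GIS src rng) = uhat e :=
      mul_triv_mid (uf e) (triv src rng e) e (huvf e) rfl
    rw [e1] at hmem
    exact heM₁.1.2 hmem
  · -- case the vertex idempotent avoids Vs
    obtain ⟨e, heB2, hein⟩ := eps_lemma hSmul hCLP ι hinj hhom hdense B2 hB2inf
      (fun e he => hcycB e he.1) Vs hVsop hzVs
    exact heB2.2 hein
  · -- case v-part avoids Vs
    set X := (fun e => ι (vhat e)) '' B3 with hX
    have hinjOn : Set.InjOn (fun e => ι (vhat e)) B3 := by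
      intro a _ b _ hab
      have h' := Option.some.inj (hinj hab)
      exact congrArg (fun q : GISElem src rng => q.1.1.start) h'
    have hXinf : X.Infinite := hB3inf.image hinjOn
    have hiso : ∀ x ∈ X, IsOpen ({x} : Set S) := by
      rintro _ ⟨e, he, rfl⟩
      obtain ⟨hγne, hγs, hγr, -⟩ := hBf e he.1
      exact isolated_elem hSmul ι hinj hhom hdense (triv src rng e) (vf e)
        ((huvf e).symm.trans (hrf e)) (γf e) ((triv_range e).trans hγs.symm)
        (hγr.trans (triv_range e).symm) hγne
    obtain ⟨x, hx⟩ := engine hCLP hXinf hiso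
    have hxz : ι 0 * x ∈ Vs := by
      rw [zero_mul_S hSmul ι hhom hdense x]
      exact hzVs
    obtain ⟨N₂, N₁, hN₂, hN₁, hzN₂, hxN₁, hprodN⟩ := cont2 hSmul hVsop hxz
    set M₁ := {e : V | e ∈ B3 ∧ ι (vhat e) ∈ N₁} with hM₁
    have hM₁inf : M₁.Infinite := by
      intro hfin
      have hFfin : ((fun e => ι (vhat e)) '' M₁).Finite := hfin.image _
      obtain ⟨y, hyN₁, hyX, hyF, -⟩ := acc_pick hx (hN₁.mem_nhds hxN₁) hFfin
      obtain ⟨e₀, he₀, rfl⟩ := hyX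
      exact hyF ⟨e₀, ⟨he₀, hyN₁⟩, rfl⟩
    obtain ⟨e, heM₁, hein⟩ := eps_lemma hSmul hCLP ι hinj hhom hdense M₁ hM₁inf
      (fun e he => hcycB e he.1.1) N₂ hN₂ hzN₂
    have hmem : ι (epsE src rng e) * ι (vhat e) ∈ Vs := hprodN _ hein _ heM₁.2
    rw [← hhom] at hmem
    have e1 : (epsE src rng e * vhat e : GIS src rng) = vhat e :=
      mul_triv_mid (triv src rng e) (vf e) e rfl ((huvf e).symm.trans (hrf e))
    rw [e1] at hmem
    exact heM₁.1.2 hmem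
end
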